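/- (Correctness of the Boltzmann sampler) Fix a finite alphabet A with |A| = 4, positive loop weights w(L,σ_L), and Q(X,τ) = Σ_{σ : V^X → A, σ|_{E^X} = τ} Π_{P∈X} w(P, σ|_P) as above. Consider the recursive sampler that, given an irreducible substructure X, boundary assignment τ : E^X → A, removed loop L, and irreducible components X_1,…,X_k of X∖{L}, samples the assignment σ' on (L ∪ ⋃_i E^{X_i}) ∖ E^X with probability w(L,σ_L) · Π_{i=1}^k Q(X_i,τ_{X_i}) / Q(X,τ) and then recurses independently on each X_i with boundary τ_{X_i}. Started on the irreducible components of the full bistructure B with empty boundary, the probability that the sampler outputs a given full assignment σ : V^B → A equals Π_{L∈B} w(L,σ|_L) / Q(B,∅); in particular, with w(L,σ_L) = e^{−η(σ_L,L)/KT} the sampler produces σ with Boltzmann probability e^{−η(σ,B)/KT}/Q(B). -/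

import Mathlib

/-- An arc `(i,j)` in a diagram. -/
abbrev Arc : Type := ℕ × ℕ

/-- Two arcs cross iff `p.1 < q.1 < p.2 < q.2` or `q.1 < p.1 < q.2 < p.2`. -/
def Arc.crosses (p q : Arc) : Prop :=
  (p.1 < q.1 ∧ q.1 < p.2 ∧ p.2 < q.2) ∨ (q.1 < p.1 ∧ p.1 < q.2 ∧ q.2 < p.2)

/-- Nesting order: `Arc.nested q p` means `q ≺ p`, i.e. `p.1 < q.1 < q.2 < p.2`. -/
def Arc.nested (q p : Arc) : Prop := p.1 < q.1 ∧ q.1 < q.2 ∧ q.2 < p.2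

/-- An RNA secondary structure on `{1,…,n}` with rainbow arc `(0, n+1)`. -/
structure SecStr (n : ℕ) : Type where
  arcs : Finset Arc
  lt_of_mem : ∀ p ∈ arcs, p.1 < p.2
  le_of_mem : ∀ p ∈ arcs, p.2 ≤ n + 1
  rainbow_mem : (0, n + 1) ∈ arcs
  matching : ∀ p ∈ arcs, ∀ q ∈ arcs, ∀ v : ℕ, 1 ≤ v → v ≤ n →
    (v = p.1 ∨ v = p.2) → (v = q.1 ∨ v = q.2) → p = q
  noncrossing : ∀ p ∈ arcs, ∀ q ∈ arcs, ¬ Arc.crosses p q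

namespace SecStr

variable {n : ℕ}

/-- The loop of an arc `p` of `R`. -/
def loop (R : SecStr n) (p : Arc) : Set ℕ :=
  {v | p.1 ≤ v ∧ v ≤ p.2 ∧ ¬ ∃ q ∈ R.arcs, Arc.nested q p ∧ q.1 < v ∧ v < q.2}

/-- A loop of `R` is the loop of one of its arcs. -/
def IsLoop (R : SecStr n) (L : Set ℕ) : Prop := ∃ p ∈ R.arcs, L = R.loop p

end SecStr
/-- A label for a loop of a bistructure: `true` tags `R`-loops, `false` tags `S`-loops,
together with the maximal arc of the loop. -/
abbrev LoopLabel : Type := Bool × Arc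

/-- A bistructure `B(R,S)`: two secondary structures on the same vertex set. -/
structure Bistructure (n : ℕ) : Type where
  R : SecStr n
  S : SecStr n

namespace Bistructure

variable {n : ℕ}

/-- The loop set of a bistructure: the disjoint union of the `R`-loops and `S`-loops,
encoded as tagged arcs. -/
def labels (B : Bistructure n) : Finset LoopLabel :=
  B.R.arcs.image (fun p => (true, p)) ∪ B.S.arcs.image (fun p => (false, p))

/-- The vertex set of the loop with label `x`. -/
def loopSet (B : Bistructure n) (x : LoopLabel) : Set ℕ :=
  if x.1 then B.R.loop x.2 else B.S.loop x.2

/-- Two loops intersect. -/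
def intersects (B : Bistructure n) (a b : LoopLabel) : Prop :=
  (B.loopSet a ∩ B.loopSet b).Nonempty

end Bistructure

open scoped Classical

namespace Bistructure

variable {n : ℕ}

/-- The vertex set `V^X` of a substructure `X` (a set of loops of `B`). -/
def Vset (B : Bistructure n) (X : Finset LoopLabel) : Set ℕ :=
  ⋃ L ∈ X, B.loopSet L

/-- The exposed vertex set `E^X = V^X ∩ V^{B∖X}` of a substructure `X`. -/
def exposed (B : Bistructure n) (X : Finset LoopLabel) : Set ℕ :=
  B.Vset X ∩ B.Vset (B.labels \ X)

/-- A substructure is reducible if it can be partitioned into two nonempty parts such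
that every loop of one part is disjoint from every loop of the other. -/
def Reducible (B : Bistructure n) (X : Finset LoopLabel) : Prop :=
  ∃ X1 X2 : Finset LoopLabel, X1 ∪ X2 = X ∧ Disjoint X1 X2 ∧
    X1.Nonempty ∧ X2.Nonempty ∧ ∀ a ∈ X1, ∀ b ∈ X2, ¬ B.intersects a b

/-- The connected component of `L` in the loop intersection graph of `X`. -/
noncomputable def comp (B : Bistructure n) (X : Finset LoopLabel) (L : LoopLabel) :
    Finset LoopLabel :=
  X.filter (fun P =>
    Relation.ReflTransGen (fun a b => a ∈ X ∧ b ∈ X ∧ B.intersects a b) L P)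

/-- The irreducible components of a substructure `X`: the connected components of its
loop intersection graph. -/
noncomputable def comps (B : Bistructure n) (X : Finset LoopLabel) :
    Finset (Finset LoopLabel) :=
  X.image (B.comp X)

end Bistructure

/-- The substructures arising in the loop-removal decomposition determined by the choice
function `σ`: the irreducible components of `B` itself, and recursively the irreducible
components of `X ∖ {σ X}` for every arising substructure `X`. -/
inductive Bistructure.Reach {n : ℕ} (B : Bistructure n)
    (σ : Finset LoopLabel → LoopLabel) : Finset LoopLabel → Prop where
  | top (C : Finset LoopLabel) (hC : C ∈ B.comps B.labels) : Bistructure.Reach B σ C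
  | step (X C : Finset LoopLabel) (hX : Bistructure.Reach B σ X)
      (hC : C ∈ B.comps (X.erase (σ X))) : Bistructure.Reach B σ C

namespace Bistructure

variable {n : ℕ}

/-- The cost `|L ∪ ⋃ᵢ E^{Xᵢ}|` of the removal step at the substructure `X`, where
`L = σ X` is the removed loop and the `Xᵢ` are the irreducible components of
`X ∖ {L}`. -/
noncomputable def stepcost (B : Bistructure n) (σ : Finset LoopLabel → LoopLabel)
    (X : Finset LoopLabel) : ℕ :=
  (B.loopSet (σ X) ∪ ⋃ C ∈ B.comps (X.erase (σ X)), B.exposed C).ncard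

/-- The cost `κ_D(B)` of the decomposition determined by the choice function `σ`:
the maximum of the step costs over all arising substructures. -/
noncomputable def cost (B : Bistructure n) (σ : Finset LoopLabel → LoopLabel) : ℕ :=
  sSup {m | ∃ X, B.Reach σ X ∧ m = B.stepcost σ X}

end Bistructure

namespace Bistructure

variable {n : ℕ} {A : Type} [Fintype A]

/-- The dual partition function `Q(X,τ)` of a substructure `X` with boundary assignment
`τ` on the exposed vertices: the sum over all assignments `σ` of letters of `A` to the
vertices of `X` agreeing with `τ` on `E^X` (extended by the default letter `d` off
`V^X`) of the product of the loop weights. -/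
noncomputable def Qpf (B : Bistructure n) (w : LoopLabel → (Fin (n + 2) → A) → ℝ)
    (d : A) (X : Finset LoopLabel) (τ : Fin (n + 2) → A) : ℝ :=
  ∑ σ ∈ Finset.univ.filter (fun σ : Fin (n + 2) → A =>
      (∀ v : Fin (n + 2), (v : ℕ) ∈ B.exposed X → σ v = τ v) ∧
      (∀ v : Fin (n + 2), (v : ℕ) ∉ B.Vset X → σ v = d)),
    ∏ P ∈ X, w P σ

/-- The set `W = (L ∪ ⋃ᵢ E^{Xᵢ}) ∖ E^X` of vertices newly assigned at the removal of
the loop `L` from the substructure `X`. -/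
noncomputable def Wset (B : Bistructure n) (X : Finset LoopLabel) (L : LoopLabel) :
    Set ℕ :=
  (B.loopSet L ∪ ⋃ C ∈ B.comps (X.erase L), B.exposed C) \ B.exposed X

/-- The combined assignment: `σ'` on `W` and `τ` elsewhere. -/
noncomputable def combine (W : Set ℕ) (σ' τ : Fin (n + 2) → A) : Fin (n + 2) → A :=
  fun v => if (v : ℕ) ∈ W then σ' v else τ v

end Bistructure

section Aux

variable {n : ℕ} {A : Type} [Fintype A]

lemma aux_intersects_symm (B : Bistructure n) {a b : LoopLabel} (h : B.intersects a b) :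
    B.intersects b a := by
  obtain ⟨v, hv1, hv2⟩ := h
  exact ⟨v, hv2, hv1⟩

lemma aux_mem_comp_self (B : Bistructure n) {X : Finset LoopLabel} {L : LoopLabel}
    (h : L ∈ X) : L ∈ B.comp X L :=
  Finset.mem_filter.2 ⟨h, Relation.ReflTransGen.refl⟩

lemma aux_comp_subset (B : Bistructure n) (X : Finset LoopLabel) (L : LoopLabel) :
    B.comp X L ⊆ X := Finset.filter_subset _ _

lemma aux_comp_eq_of_mem (B : Bistructure n) {X : Finset LoopLabel} {L P : LoopLabel}
    (h : P ∈ B.comp X L) : B.comp X P = B.comp X L := by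
  have hsym : Symmetric (fun a b => a ∈ X ∧ b ∈ X ∧ B.intersects a b) := by
    rintro a b ⟨h1, h2, h3⟩
    exact ⟨h2, h1, aux_intersects_symm B h3⟩
  obtain ⟨hPX, hLP⟩ := Finset.mem_filter.1 h
  ext Q
  simp only [Bistructure.comp, Finset.mem_filter]
  constructor
  · rintro ⟨hQ, hPQ⟩
    exact ⟨hQ, hLP.trans hPQ⟩
  · rintro ⟨hQ, hLQ⟩
    exact ⟨hQ, ((@Relation.ReflTransGen.stdSymm _ _ ⟨fun a b h => hsym h⟩).symm _ _ hLP).trans hLQ⟩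

lemma aux_subset_of_mem_comps (B : Bistructure n) {X C : Finset LoopLabel}
    (hC : C ∈ B.comps X) : C ⊆ X := by
  obtain ⟨L, _, rfl⟩ := Finset.mem_image.1 hC
  exact aux_comp_subset B X L

lemma aux_comps_biUnion (B : Bistructure n) (X : Finset LoopLabel) :
    (B.comps X).biUnion id = X := by
  ext L
  simp only [Finset.mem_biUnion, Bistructure.comps, Finset.mem_image, id]
  constructor
  · rintro ⟨C, ⟨M, hM, rfl⟩, hL⟩
    exact aux_comp_subset B X M hL
  · intro hL
    exact ⟨B.comp X L, ⟨L, hL, rfl⟩, aux_mem_comp_self B hL⟩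

lemma aux_comps_pairwiseDisjoint (B : Bistructure n) (X : Finset LoopLabel) :
    (↑(B.comps X) : Set (Finset LoopLabel)).PairwiseDisjoint id := by
  intro C hC C' hC' hne
  simp only [Finset.mem_coe, Bistructure.comps, Finset.mem_image] at hC hC'
  obtain ⟨L, hL, rfl⟩ := hC
  obtain ⟨L', hL', rfl⟩ := hC'
  refine Finset.disjoint_left.2 fun P hP hP' => hne ?_
  rw [← aux_comp_eq_of_mem B hP, ← aux_comp_eq_of_mem B hP']

lemma aux_prod_comps {M : Type} [CommMonoid M] (B : Bistructure n) (X : Finset LoopLabel)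
    (f : LoopLabel → M) : ∏ C ∈ B.comps X, ∏ P ∈ C, f P = ∏ P ∈ X, f P := by
  conv_rhs => rw [← aux_comps_biUnion B X]
  rw [Finset.prod_biUnion (aux_comps_pairwiseDisjoint B X)]
  rfl

lemma aux_loopSet_subset_Vset (B : Bistructure n) {X : Finset LoopLabel} {L : LoopLabel}
    (h : L ∈ X) : B.loopSet L ⊆ B.Vset X := fun v hv =>
  Set.mem_biUnion h hv

lemma aux_disjoint_vset_loopSet (B : Bistructure n) {X C : Finset LoopLabel}
    (hC : C ∈ B.comps X) {b : LoopLabel} (hbX : b ∈ X) (hbC : b ∉ C) :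
    Disjoint (B.Vset C) (B.loopSet b) := by
  obtain ⟨L, hL, rfl⟩ := Finset.mem_image.1 hC
  rw [Set.disjoint_left]
  intro v hv hvb
  simp only [Bistructure.Vset, Set.mem_iUnion, exists_prop] at hv
  obtain ⟨a, haC, hva⟩ := hv
  obtain ⟨haX, hLa⟩ := Finset.mem_filter.1 haC
  exact hbC (Finset.mem_filter.2 ⟨hbX, hLa.tail ⟨haX, hbX, ⟨v, hva, hvb⟩⟩⟩)

lemma aux_exposed_comp_empty (B : Bistructure n) {C : Finset LoopLabel}
    (hC : C ∈ B.comps B.labels) : B.exposed C = ∅ := by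
  rw [Set.eq_empty_iff_forall_notMem]
  intro v hv
  obtain ⟨hv1, hv2⟩ := hv
  simp only [Bistructure.Vset, Set.mem_iUnion, exists_prop] at hv2
  obtain ⟨b, hb, hvb⟩ := hv2
  obtain ⟨hbX, hbC⟩ := Finset.mem_sdiff.1 hb
  exact Set.disjoint_left.1 (aux_disjoint_vset_loopSet B hC hbX hbC) hv1 hvb

lemma aux_disjoint_vset_comps (B : Bistructure n) {C C' : Finset LoopLabel}
    (hC : C ∈ B.comps B.labels) (hC' : C' ∈ B.comps B.labels) (hne : C ≠ C') :
    Disjoint (B.Vset C) (B.Vset C') := by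
  have : ∀ b ∈ C', Disjoint (B.Vset C) (B.loopSet b) := by
    intro b hb
    refine aux_disjoint_vset_loopSet B hC (aux_subset_of_mem_comps B hC' hb) fun hbC => ?_
    exact hne (Finset.disjoint_left.1
      ((aux_comps_pairwiseDisjoint B B.labels) (Finset.mem_coe.2 hC) (Finset.mem_coe.2 hC')
        hne) hbC hb).elim
  rw [Set.disjoint_left]
  intro v hv hv'
  simp only [Bistructure.Vset, Set.mem_iUnion, exists_prop] at hv'
  obtain ⟨b, hb, hvb⟩ := hv'
  exact Set.disjoint_left.1 (this b hb) hv hvb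

lemma aux_Vset_eq_biUnion (B : Bistructure n) (X : Finset LoopLabel) :
    (⋃ C ∈ B.comps X, B.Vset C) = B.Vset X := by
  ext v
  simp only [Set.mem_iUnion, exists_prop, Bistructure.Vset]
  constructor
  · rintro ⟨C, hC, L, hL, hv⟩
    exact ⟨L, aux_subset_of_mem_comps B hC hL, hv⟩
  · rintro ⟨L, hL, hv⟩
    exact ⟨B.comp X L, Finset.mem_image_of_mem _ hL, L, aux_mem_comp_self B hL, hv⟩

lemma aux_exposed_labels_empty (B : Bistructure n) : B.exposed B.labels = ∅ := by
  simp [Bistructure.exposed, Bistructure.Vset]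

lemma aux_Qpf_pos (B : Bistructure n) (w : LoopLabel → (Fin (n + 2) → A) → ℝ)
    (hwpos : ∀ L σ, 0 < w L σ) (d : A) (X : Finset LoopLabel) (τ : Fin (n + 2) → A) :
    0 < B.Qpf w d X τ := by
  apply Finset.sum_pos
  · intro σ _
    exact Finset.prod_pos fun P _ => hwpos P σ
  · refine ⟨fun v => if (v : ℕ) ∈ B.Vset X then τ v else d, ?_⟩
    simp only [Finset.mem_filter, Finset.mem_univ, true_and]
    constructor
    · intro v hv
      exact if_pos hv.1
    · intro v hv
      exact if_neg hv

lemma aux_Qpf_of_exposed_empty (B : Bistructure n) (w : LoopLabel → (Fin (n + 2) → A) → ℝ)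
    (d : A) {C : Finset LoopLabel} (hC : B.exposed C = ∅) (τ : Fin (n + 2) → A) :
    B.Qpf w d C τ = ∑ σ ∈ Finset.univ.filter (fun σ : Fin (n + 2) → A =>
      ∀ v : Fin (n + 2), (v : ℕ) ∉ B.Vset C → σ v = d), ∏ P ∈ C, w P σ := by
  unfold Bistructure.Qpf
  apply Finset.sum_congr _ fun _ _ => rfl
  ext σ
  simp [hC]

lemma aux_fact (B : Bistructure n) (w : LoopLabel → (Fin (n + 2) → A) → ℝ)
    (hwloc : ∀ (L : LoopLabel) (σ σ' : Fin (n + 2) → A),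
        (∀ v : Fin (n + 2), (v : ℕ) ∈ B.loopSet L → σ v = σ' v) → w L σ = w L σ')
    (d : A) (τ : Fin (n + 2) → A) (cs : Finset (Finset LoopLabel))
    (hdisj : ∀ C ∈ cs, ∀ C' ∈ cs, C ≠ C' → Disjoint (B.Vset C) (B.Vset C'))
    (hexp : ∀ C ∈ cs, B.exposed C = ∅) :
    ∑ σ ∈ Finset.univ.filter (fun σ : Fin (n + 2) → A =>
        ∀ v : Fin (n + 2), (v : ℕ) ∉ ⋃ C ∈ cs, B.Vset C → σ v = d),
      ∏ C ∈ cs, ∏ P ∈ C, w P σ = ∏ C ∈ cs, B.Qpf w d C τ := by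
  classical
  induction cs using Finset.induction_on with
  | empty =>
      rw [Finset.prod_empty]
      have h1 : (Finset.univ.filter (fun σ : Fin (n + 2) → A =>
          ∀ v : Fin (n + 2), (v : ℕ) ∉ ⋃ C ∈ (∅ : Finset (Finset LoopLabel)), B.Vset C →
            σ v = d)) = {fun _ => d} := by
        ext σ
        simp [funext_iff]
      rw [h1]
      simp
  | @insert C cs hCcs ih =>
      have hdisj' : ∀ C' ∈ cs, ∀ C'' ∈ cs, C' ≠ C'' → Disjoint (B.Vset C') (B.Vset C'') :=
        fun C' h1 C'' h2 h3 => hdisj C' (Finset.mem_insert_of_mem h1) C''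
          (Finset.mem_insert_of_mem h2) h3
      have hexp' : ∀ C' ∈ cs, B.exposed C' = ∅ :=
        fun C' h1 => hexp C' (Finset.mem_insert_of_mem h1)
      have hCU : ∀ v : ℕ, v ∈ B.Vset C → v ∉ ⋃ C' ∈ cs, B.Vset C' := by
        intro v hv hv'
        simp only [Set.mem_iUnion, exists_prop] at hv'
        obtain ⟨C', hC', hvC'⟩ := hv'
        have hne : C ≠ C' := fun h => hCcs (h ▸ hC')
        exact Set.disjoint_left.1 (hdisj C (Finset.mem_insert_self C cs) C'
          (Finset.mem_insert_of_mem hC') hne) hv hvC'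
      rw [Finset.prod_insert hCcs,
        aux_Qpf_of_exposed_empty B w d (hexp C (Finset.mem_insert_self C cs)) τ,
        ← ih hdisj' hexp', Finset.sum_mul_sum, ← Finset.sum_product']
      refine Finset.sum_nbij'
        (fun σ => (fun v => if (v : ℕ) ∈ B.Vset C then σ v else d,
          fun v => if (v : ℕ) ∈ ⋃ C' ∈ cs, B.Vset C' then σ v else d))
        (fun p v => if (v : ℕ) ∈ B.Vset C then p.1 v else p.2 v)
        ?_ ?_ ?_ ?_ ?_
      · intro σ hσ
        simp only [Finset.mem_filter, Finset.mem_univ, true_and] at hσ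
        simp only [Finset.mem_product, Finset.mem_filter, Finset.mem_univ, true_and]
        exact ⟨fun v hv => if_neg hv, fun v hv => if_neg hv⟩
      · intro p hp
        simp only [Finset.mem_product, Finset.mem_filter, Finset.mem_univ, true_and] at hp
        simp only [Finset.mem_filter, Finset.mem_univ, true_and]
        intro v hv
        simp only [Set.mem_iUnion, exists_prop] at hv
        push_neg at hv
        have hv1 : (v : ℕ) ∉ B.Vset C := by
          intro h
          exact (hv C (Finset.mem_insert_self C cs)) h
        have hv2 : (v : ℕ) ∉ ⋃ C' ∈ cs, B.Vset C' := by
          simp only [Set.mem_iUnion, exists_prop]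
          rintro ⟨C', hC', hvC'⟩
          exact hv C' (Finset.mem_insert_of_mem hC') hvC'
        rw [if_neg hv1]
        exact hp.2 v hv2
      · intro σ hσ
        simp only [Finset.mem_filter, Finset.mem_univ, true_and] at hσ
        funext v
        by_cases h1 : (v : ℕ) ∈ B.Vset C
        · simp [h1]
        · simp only [if_neg h1]
          by_cases h2 : (v : ℕ) ∈ ⋃ C' ∈ cs, B.Vset C'
          · rw [if_pos h2]
          · rw [if_neg h2]
            refine (hσ v ?_).symm
            simp only [Set.mem_iUnion, exists_prop]
            rintro ⟨C', hC', hvC'⟩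
            rcases Finset.mem_insert.1 hC' with h | h
            · exact h1 (h ▸ hvC')
            · exact h2 (Set.mem_iUnion₂.2 ⟨C', h, hvC'⟩)
      · intro p hp
        simp only [Finset.mem_product, Finset.mem_filter, Finset.mem_univ, true_and] at hp
        ext v
        · by_cases h1 : (v : ℕ) ∈ B.Vset C
          · simp [h1]
          · simp [h1, hp.1 v h1]
        · by_cases h2 : (v : ℕ) ∈ ⋃ C' ∈ cs, B.Vset C'
          · have h1 : (v : ℕ) ∉ B.Vset C := fun h => hCU v h h2
            simp [h1, h2]
          · simp [h2, hp.2 v h2]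
      · intro σ hσ
        simp only
        rw [Finset.prod_insert hCcs]
        congr 1
        · refine Finset.prod_congr rfl fun P hP => hwloc P σ _ fun v hv => ?_
          rw [if_pos (aux_loopSet_subset_Vset B hP hv)]
        · refine Finset.prod_congr rfl fun C' hC' => Finset.prod_congr rfl fun P hP => ?_
          refine hwloc P σ _ fun v hv => ?_
          rw [if_pos]
          exact Set.mem_iUnion₂.2 ⟨C', hC', aux_loopSet_subset_Vset B hP hv⟩

lemma aux_Qpf_prod_comps (B : Bistructure n) (w : LoopLabel → (Fin (n + 2) → A) → ℝ)
    (hwloc : ∀ (L : LoopLabel) (σ σ' : Fin (n + 2) → A),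
        (∀ v : Fin (n + 2), (v : ℕ) ∈ B.loopSet L → σ v = σ' v) → w L σ = w L σ')
    (d : A) (τ : Fin (n + 2) → A) :
    B.Qpf w d B.labels τ = ∏ C ∈ B.comps B.labels, B.Qpf w d C τ := by
  rw [← aux_fact B w hwloc d τ (B.comps B.labels)
    (fun C hC C' hC' hne => aux_disjoint_vset_comps B hC hC' hne)
    (fun C hC => aux_exposed_comp_empty B hC)]
  unfold Bistructure.Qpf
  refine Finset.sum_congr ?_ fun σ _ => (aux_prod_comps B B.labels (fun P => w P σ)).symm
  ext σ
  simp [aux_exposed_labels_empty B, aux_Vset_eq_biUnion B B.labels]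

lemma aux_sampler (B : Bistructure n) (w : LoopLabel → (Fin (n + 2) → A) → ℝ)
    (hwpos : ∀ L σ, 0 < w L σ) (d : A)
    (σch : Finset LoopLabel → LoopLabel)
    (hσch : ∀ X, B.Reach σch X → σch X ∈ X)
    (P : Finset LoopLabel → (Fin (n + 2) → A) → (Fin (n + 2) → A) → ℝ)
    (hrec : ∀ X, B.Reach σch X → ∀ τ σ : Fin (n + 2) → A,
        (∀ v : Fin (n + 2), (v : ℕ) ∈ B.exposed X → σ v = τ v) →
        P X τ σ =
          (w (σch X) σ * ∏ C ∈ B.comps (X.erase (σch X)), B.Qpf w d C σ) / B.Qpf w d X τ *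
            ∏ C ∈ B.comps (X.erase (σch X)), P C σ σ)
    (σ : Fin (n + 2) → A) :
    ∀ m : ℕ, ∀ X : Finset LoopLabel, X.card ≤ m → B.Reach σch X →
      ∀ τ : Fin (n + 2) → A, (∀ v : Fin (n + 2), (v : ℕ) ∈ B.exposed X → σ v = τ v) →
      P X τ σ = (∏ L ∈ X, w L σ) / B.Qpf w d X τ := by
  intro m
  induction m with
  | zero =>
      intro X hX hRX τ hτ
      have h1 := hσch X hRX
      rw [Nat.le_zero, Finset.card_eq_zero] at hX
      simp [hX] at h1
  | succ m ih =>
      intro X hX hRX τ hτ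
      rw [hrec X hRX τ σ hτ]
      have hL := hσch X hRX
      have key : ∀ C ∈ B.comps (X.erase (σch X)),
          P C σ σ = (∏ P ∈ C, w P σ) / B.Qpf w d C σ := by
        intro C hC
        refine ih C ?_ (Bistructure.Reach.step X C hRX hC) σ (fun v _ => rfl)
        have hsub : C ⊆ X.erase (σch X) := aux_subset_of_mem_comps B hC
        have := (Finset.card_le_card hsub).trans_lt (Finset.card_erase_lt_of_mem hL)
        omega
      rw [Finset.prod_congr rfl key, Finset.prod_div_distrib,
        aux_prod_comps B (X.erase (σch X)) (fun P => w P σ),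
        ← Finset.mul_prod_erase X (fun L => w L σ) hL]
      have hQX : B.Qpf w d X τ ≠ 0 := ne_of_gt (aux_Qpf_pos B w hwpos d X τ)
      have hQC : ∀ C ∈ B.comps (X.erase (σch X)), B.Qpf w d C σ ≠ 0 :=
        fun C _ => ne_of_gt (aux_Qpf_pos B w hwpos d C σ)
      have hQCne : (∏ C ∈ B.comps (X.erase (σch X)), B.Qpf w d C σ) ≠ 0 :=
        Finset.prod_ne_zero_iff.2 hQC
      field_simp

end Aux

/-- correctness of the Boltzmann sampler: let `A` be an alphabet with
`|A| = 4`, `w` positive loop weights depending only on the letters on the loop, `σch` a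
valid loop-removal choice, and let `P X τ σ` be the probability that the recursive
sampler started on the irreducible substructure `X` with boundary assignment `τ`
outputs the assignment `σ`; it satisfies the recursion
`P X τ σ = (w(L,σ_L) · Πᵢ Q(Xᵢ,τ_{Xᵢ}) / Q(X,τ)) · Πᵢ P Xᵢ σ σ` where `L = σch X` and
the `Xᵢ` are the irreducible components of `X ∖ {L}`.  Then, started on the irreducible
components of the full bistructure `B` with empty boundary, the sampler outputs a given
full assignment `σ` with probability `Π_{L∈B} w(L,σ_L) / Q(B,∅)`, i.e. with the
Boltzmann probability when `w(L,σ_L) = exp(−η(σ_L,L)/KT)`. -/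
theorem stmt16 (n : ℕ) (A : Type) [Fintype A] (hA : Fintype.card A = 4) (d : A)
    (B : Bistructure n) (w : LoopLabel → (Fin (n + 2) → A) → ℝ)
    (hwpos : ∀ L σ, 0 < w L σ)
    (hwloc : ∀ (L : LoopLabel) (σ σ' : Fin (n + 2) → A),
        (∀ v : Fin (n + 2), (v : ℕ) ∈ B.loopSet L → σ v = σ' v) → w L σ = w L σ')
    (σch : Finset LoopLabel → LoopLabel)
    (hσch : ∀ X, B.Reach σch X → σch X ∈ X)
    (P : Finset LoopLabel → (Fin (n + 2) → A) → (Fin (n + 2) → A) → ℝ)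
    (hrec : ∀ X, B.Reach σch X → ∀ τ σ : Fin (n + 2) → A,
        (∀ v : Fin (n + 2), (v : ℕ) ∈ B.exposed X → σ v = τ v) →
        P X τ σ =
          (w (σch X) σ * ∏ C ∈ B.comps (X.erase (σch X)), B.Qpf w d C σ) / B.Qpf w d X τ *
            ∏ C ∈ B.comps (X.erase (σch X)), P C σ σ) :
    ∀ σ : Fin (n + 2) → A, (∀ v : Fin (n + 2), (v : ℕ) ∉ B.Vset B.labels → σ v = d) →
      ∀ τ : Fin (n + 2) → A,
        ∏ C ∈ B.comps B.labels, P C τ σ =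
          (∏ L ∈ B.labels, w L σ) / B.Qpf w d B.labels τ := by
  intro σ hσd τ
  have hP : ∀ C ∈ B.comps B.labels, P C τ σ = (∏ L ∈ C, w L σ) / B.Qpf w d C τ := by
    intro C hC
    refine aux_sampler B w hwpos d σch hσch P hrec σ C.card C le_rfl
      (Bistructure.Reach.top C hC) τ fun v hv => ?_
    rw [aux_exposed_comp_empty B hC] at hv
    exact absurd hv (Set.notMem_empty _)
  rw [Finset.prod_congr rfl hP, Finset.prod_div_distrib,
    aux_prod_comps B B.labels (fun L => w L σ), aux_Qpf_prod_comps B w hwloc d τ]
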